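/- Let n be a natural number and let μ be a partition of n. Then the class sum s_μ lies in the ℚ-subalgebra of the group algebra ℚ[S_n] generated by the cycle sums {s_i : 1 ≤ i ≤ supp(μ)}. -/

import Mathlib

/-- `classSum n m` is the sum, in the group algebra `ℚ[Sₙ]`, of all permutations
whose cycle type is the multiset `m` (parts of size 1 being suppressed, as in
Mathlib's `Equiv.Perm.cycleType`). -/
noncomputable def classSum (n : ℕ) (m : Multiset ℕ) : MonoidAlgebra ℚ (Equiv.Perm (Fin n)) :=
  ∑ σ ∈ Finset.univ.filter (fun σ : Equiv.Perm (Fin n) => σ.cycleType = m),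
    MonoidAlgebra.single σ (1 : ℚ)

/-- The cycle sum `sᵢ`: the sum of all `i`-cycles in `Sₙ` for `i ≥ 2`, and the
identity of `ℚ[Sₙ]` for `i ≤ 1`. -/
noncomputable def cycleSum (n i : ℕ) : MonoidAlgebra ℚ (Equiv.Perm (Fin n)) :=
  if i < 2 then 1 else classSum n {i}

/-- The support of a partition `μ` of `n`: the sum of the parts of size at
least 2, i.e. `n` minus the number of parts equal to 1. -/
def Nat.Partition.supp {n : ℕ} (μ : n.Partition) : ℕ :=
  (μ.parts.filter (2 ≤ ·)).sum

open Equiv Equiv.Perm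

variable {n : ℕ}

instance {R M : Type*} [Semiring R] : CoeFun (MonoidAlgebra R M) (fun _ => M → R) :=
  ⟨fun x => x.coeff⟩

lemma classSum_apply (m : Multiset ℕ) (σ : Equiv.Perm (Fin n)) :
    classSum n m σ = if σ.cycleType = m then 1 else 0 := by
  classical
  unfold classSum
  rw [MonoidAlgebra.coeff_sum, Finset.sum_apply']
  simp only [MonoidAlgebra.coeff_single]
  rw [Finset.sum_congr rfl (fun τ _ => Finsupp.single_apply)]
  rw [Finset.sum_ite_eq']
  simp [Finset.mem_filter]

lemma ma_one_apply (σ : Equiv.Perm (Fin n)) :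
    (1 : MonoidAlgebra ℚ (Equiv.Perm (Fin n))) σ = if σ = 1 then 1 else 0 := by
  rw [MonoidAlgebra.one_def, MonoidAlgebra.coeff_single, Finsupp.single_apply]
  simp [eq_comm]

lemma classSum_central (m : Multiset ℕ) (y : MonoidAlgebra ℚ (Equiv.Perm (Fin n))) :
    classSum n m * y = y * classSum n m := by
  induction y using MonoidAlgebra.induction_on with
  | of g =>
    ext τ
    rw [MonoidAlgebra.of_apply, MonoidAlgebra.mul_single_apply, MonoidAlgebra.single_mul_apply]
    rw [classSum_apply, classSum_apply]
    have : (τ * g⁻¹).cycleType = (g⁻¹ * τ).cycleType := by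
      have : g⁻¹ * τ = g⁻¹ * (τ * g⁻¹) * g⁻¹⁻¹ := by group
      rw [this, cycleType_conj]
    rw [this]
    ring
  | add f g hf hg => rw [mul_add, add_mul, hf, hg]
  | smul r f hf => rw [mul_smul_comm, smul_mul_assoc, hf]

lemma cycleSum_central (i : ℕ) (y : MonoidAlgebra ℚ (Equiv.Perm (Fin n))) :
    cycleSum n i * y = y * cycleSum n i := by
  unfold cycleSum
  split
  · rw [one_mul, mul_one]
  · exact classSum_central _ y

lemma central_apply_conj {x : MonoidAlgebra ℚ (Equiv.Perm (Fin n))}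
    (hx : ∀ y, x * y = y * x) (c σ : Equiv.Perm (Fin n)) :
    x (c * σ * c⁻¹) = x σ := by
  have h := hx (MonoidAlgebra.single c 1)
  have := congrArg (fun z => z (c * σ)) h
  simp only [MonoidAlgebra.mul_single_apply, MonoidAlgebra.single_mul_apply, one_mul, mul_one] at this
  rw [mul_assoc] at this
  simpa [mul_assoc] using this

lemma central_apply_of_cycleType_eq {x : MonoidAlgebra ℚ (Equiv.Perm (Fin n))}
    (hx : ∀ y, x * y = y * x) {σ τ : Equiv.Perm (Fin n)}
    (h : σ.cycleType = τ.cycleType) : x σ = x τ := by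
  obtain ⟨c, hc⟩ := isConj_iff.mp (isConj_of_cycleType_eq h)
  rw [← hc]
  exact (central_apply_conj hx c σ).symm ▸ (central_apply_conj hx c σ)



variable {G : Type*} [Group G] [DecidableEq G]

lemma ma_mul_apply_ne_zero {x y : MonoidAlgebra ℚ G} {g : G}
    (h : (x * y) g ≠ 0) : ∃ a b, x a ≠ 0 ∧ y b ≠ 0 ∧ a * b = g := by
  by_contra hc
  push_neg at hc
  apply h
  rw [MonoidAlgebra.mul_apply, Finsupp.sum]
  refine Finset.sum_eq_zero fun a ha => ?_
  rw [Finsupp.sum]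
  refine Finset.sum_eq_zero fun b hb => ?_
  split
  · exact absurd ‹a * b = g› (hc a b (Finsupp.mem_support_iff.mp ha) (Finsupp.mem_support_iff.mp hb))
  · rfl

lemma ma_mul_apply_nonneg {x y : MonoidAlgebra ℚ G}
    (hx : ∀ g, 0 ≤ x g) (hy : ∀ g, 0 ≤ y g) (g : G) : 0 ≤ (x * y) g := by
  rw [MonoidAlgebra.mul_apply, Finsupp.sum]
  refine Finset.sum_nonneg fun a _ => ?_
  rw [Finsupp.sum]
  refine Finset.sum_nonneg fun b _ => ?_
  split
  · exact mul_nonneg (hx a) (hy b)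
  · exact le_refl 0

lemma ma_mul_apply_term_le {x y : MonoidAlgebra ℚ G}
    (hx : ∀ g, 0 ≤ x g) (hy : ∀ g, 0 ≤ y g) (a b : G) :
    x a * y b ≤ (x * y) (a * b) := by
  have hnn : ∀ (a' b' : G), (0:ℚ) ≤ if a' * b' = a * b then x a' * y b' else 0 := by
    intro a' b'
    split
    · exact mul_nonneg (hx a') (hy b')
    · exact le_refl 0
  by_cases ha : x a = 0
  · rw [ha, zero_mul]
    exact ma_mul_apply_nonneg hx hy _
  by_cases hb : y b = 0
  · rw [hb, mul_zero]
    exact ma_mul_apply_nonneg hx hy _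
  have hmem : a ∈ x.coeff.support := Finsupp.mem_support_iff.mpr ha
  have hmemb : b ∈ y.coeff.support := Finsupp.mem_support_iff.mpr hb
  rw [MonoidAlgebra.mul_apply]
  simp only [Finsupp.sum]
  calc x a * y b = (if a * b = a * b then x a * y b else 0) := by simp
    _ ≤ ∑ b' ∈ y.coeff.support, if a * b' = a * b then x a * y b' else 0 :=
        Finset.single_le_sum (fun b' _ => hnn a b') hmemb
    _ ≤ ∑ a' ∈ x.coeff.support, ∑ b' ∈ y.coeff.support, if a' * b' = a * b then x a' * y b' else 0 :=
        Finset.single_le_sum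
          (f := fun a' => ∑ b' ∈ y.coeff.support, if a' * b' = a * b then x a' * y b' else 0)
          (fun a' _ => Finset.sum_nonneg fun b' _ => hnn a' b') hmem




/-- union of supports of a list of permutations -/
def suppUnion (l : List (Equiv.Perm (Fin n))) : Finset (Fin n) :=
  l.foldr (fun g s => g.support ∪ s) ∅

@[simp] lemma suppUnion_nil : suppUnion (n := n) [] = ∅ := rfl

@[simp] lemma suppUnion_cons (g : Equiv.Perm (Fin n)) (l) :
    suppUnion (g :: l) = g.support ∪ suppUnion l := rfl

lemma prod_support_subset (l : List (Equiv.Perm (Fin n))) :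
    l.prod.support ⊆ suppUnion l := by
  induction l with
  | nil => simp [suppUnion]
  | cons g l ih =>
    rw [List.prod_cons]
    refine (Equiv.Perm.support_mul_le g l.prod).trans ?_
    simp only [suppUnion_cons]
    exact Finset.union_subset_union (le_refl _) ih

lemma suppUnion_card_le (l : List (Equiv.Perm (Fin n))) :
    (suppUnion l).card ≤ (l.map (fun g => g.support.card)).sum := by
  induction l with
  | nil => simp [suppUnion]
  | cons g l ih =>
    simp only [suppUnion_cons, List.map_cons, List.sum_cons]
    exact (Finset.card_union_le _ _).trans (by omega)

lemma mem_subset_suppUnion {l : List (Equiv.Perm (Fin n))} {g : Equiv.Perm (Fin n)}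
    (h : g ∈ l) : g.support ⊆ suppUnion l := by
  induction l with
  | nil => simp at h
  | cons a l ih =>
    simp only [suppUnion_cons]
    rcases List.mem_cons.mp h with rfl | h
    · exact Finset.subset_union_left
    · exact (ih h).trans Finset.subset_union_right

lemma pairwise_disjoint_of_card (l : List (Equiv.Perm (Fin n)))
    (h : (suppUnion l).card = (l.map (fun g => g.support.card)).sum) :
    l.Pairwise Equiv.Perm.Disjoint := by
  induction l with
  | nil => simp
  | cons g l ih =>
    simp only [suppUnion_cons, List.map_cons, List.sum_cons] at h
    have h1 : (g.support ∪ suppUnion l).card ≤ g.support.card + (suppUnion l).card :=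
      Finset.card_union_le _ _
    have h2 := suppUnion_card_le l
    have hcard : (suppUnion l).card = (l.map (fun g => g.support.card)).sum := by omega
    have hun : (g.support ∪ suppUnion l).card = g.support.card + (suppUnion l).card := by omega
    have hdisj : Disjoint g.support (suppUnion l) := Finset.card_union_eq_card_add_card.mp hun
    refine List.Pairwise.cons (fun b hb => ?_) (ih hcard)
    rw [Equiv.Perm.disjoint_iff_disjoint_support]
    exact hdisj.mono_right (mem_subset_suppUnion hb)

/-- key: a product of cycles whose support sizes add up exactly has that cycle type -/
lemma cycleType_of_tight (l : List (Equiv.Perm (Fin n))) (σ : Equiv.Perm (Fin n))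
    (hc : ∀ g ∈ l, g.IsCycle) (hp : l.prod = σ)
    (hcard : σ.support.card = (l.map (fun g => g.support.card)).sum) :
    σ.cycleType = ↑(l.map (fun g => g.support.card)) := by
  have hsub : σ.support ⊆ suppUnion l := hp ▸ prod_support_subset l
  have h1 : σ.support.card ≤ (suppUnion l).card := Finset.card_le_card hsub
  have h2 := suppUnion_card_le l
  have hU : (suppUnion l).card = (l.map (fun g => g.support.card)).sum := by omega
  have hpd := pairwise_disjoint_of_card l hU
  have := Equiv.Perm.cycleType_eq l hp hc hpd
  rw [this]
  congr 1


lemma cycleSum_nonneg (i : ℕ) (σ : Equiv.Perm (Fin n)) : 0 ≤ cycleSum n i σ := by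
  unfold cycleSum
  split
  · rw [ma_one_apply]; split <;> norm_num
  · rw [classSum_apply]; split <;> norm_num

lemma cycleSum_support_bound {i : ℕ} {σ : Equiv.Perm (Fin n)}
    (h : cycleSum n i σ ≠ 0) : σ.support.card ≤ i := by
  unfold cycleSum at h
  split at h
  · rw [ma_one_apply] at h
    have : σ = 1 := by by_contra hne; simp [hne] at h
    simp [this]
  · rw [classSum_apply] at h
    have : σ.cycleType = {i} := by by_contra hne; simp [hne] at h
    rw [← Equiv.Perm.sum_cycleType, this, Multiset.sum_singleton]

lemma cycleSum_isCycle {i : ℕ} {σ : Equiv.Perm (Fin n)} (hi : 2 ≤ i)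
    (h : cycleSum n i σ ≠ 0) : σ.IsCycle ∧ σ.support.card = i := by
  unfold cycleSum at h
  rw [if_neg (by omega)] at h
  rw [classSum_apply] at h
  have hct : σ.cycleType = {i} := by by_contra hne; simp [hne] at h
  constructor
  · rw [← Equiv.Perm.card_cycleType_eq_one, hct]; simp
  · rw [← Equiv.Perm.sum_cycleType, hct, Multiset.sum_singleton]

/-- coefficients of a product of cycle sums are nonnegative -/
lemma listProd_nonneg (L : List ℕ) (σ : Equiv.Perm (Fin n)) :
    0 ≤ ((L.map (cycleSum n)).prod) σ := by
  induction L generalizing σ with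
  | nil =>
    simp only [List.map_nil, List.prod_nil]
    rw [ma_one_apply]; split <;> norm_num
  | cons i L ih =>
    simp only [List.map_cons, List.prod_cons]
    exact ma_mul_apply_nonneg (cycleSum_nonneg i) (fun g => ih g) σ

lemma listProd_support_bound (L : List ℕ) (σ : Equiv.Perm (Fin n))
    (h : ((L.map (cycleSum n)).prod) σ ≠ 0) : σ.support.card ≤ L.sum := by
  induction L generalizing σ with
  | nil =>
    simp only [List.map_nil, List.prod_nil] at h
    rw [ma_one_apply] at h
    have : σ = 1 := by by_contra hne; simp [hne] at h
    simp [this]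
  | cons i L ih =>
    simp only [List.map_cons, List.prod_cons] at h
    obtain ⟨a, b, ha, hb, hab⟩ := ma_mul_apply_ne_zero h
    have h1 := cycleSum_support_bound ha
    have h2 := ih b hb
    have h3 : σ.support ⊆ a.support ∪ b.support := by
      rw [← hab]; exact Equiv.Perm.support_mul_le a b
    have := (Finset.card_le_card h3).trans (Finset.card_union_le _ _)
    simp only [List.sum_cons]
    omega

/-- if the coefficient is nonzero, σ factors into cycles of the given sizes -/
lemma listProd_factorization (L : List ℕ) (hL : ∀ i ∈ L, 2 ≤ i) (σ : Equiv.Perm (Fin n))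
    (h : ((L.map (cycleSum n)).prod) σ ≠ 0) :
    ∃ l : List (Equiv.Perm (Fin n)), l.prod = σ ∧ (∀ g ∈ l, g.IsCycle) ∧
      l.map (fun g => g.support.card) = L := by
  induction L generalizing σ with
  | nil =>
    simp only [List.map_nil, List.prod_nil] at h
    rw [ma_one_apply] at h
    have : σ = 1 := by by_contra hne; simp [hne] at h
    exact ⟨[], by simp [this], by simp, rfl⟩
  | cons i L ih =>
    simp only [List.map_cons, List.prod_cons] at h
    obtain ⟨a, b, ha, hb, hab⟩ := ma_mul_apply_ne_zero h
    obtain ⟨hcyc, hcard⟩ := cycleSum_isCycle (hL i (by simp)) ha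
    obtain ⟨l, hl1, hl2, hl3⟩ := ih (fun j hj => hL j (by simp [hj])) b hb
    refine ⟨a :: l, by simp [hl1, hab], ?_, by simp [hl3, hcard]⟩
    intro g hg
    rcases List.mem_cons.mp hg with rfl | hg
    · exact hcyc
    · exact hl2 g hg

/-- product of the cycle sums of the parts of `t` -/
noncomputable def partProd (n : ℕ) (t : Multiset ℕ) : MonoidAlgebra ℚ (Equiv.Perm (Fin n)) :=
  (t.toList.map (cycleSum n)).prod

lemma listProd_central (L : List ℕ) (y : MonoidAlgebra ℚ (Equiv.Perm (Fin n))) :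
    (L.map (cycleSum n)).prod * y = y * (L.map (cycleSum n)).prod := by
  induction L with
  | nil => simp
  | cons i L ih =>
    simp only [List.map_cons, List.prod_cons]
    rw [mul_assoc, ih, ← mul_assoc, cycleSum_central, mul_assoc]

lemma partProd_central (t : Multiset ℕ) (y : MonoidAlgebra ℚ (Equiv.Perm (Fin n))) :
    partProd n t * y = y * partProd n t := listProd_central _ y

lemma partProd_nonneg (t : Multiset ℕ) (σ : Equiv.Perm (Fin n)) :
    0 ≤ partProd n t σ := listProd_nonneg _ σ

lemma partProd_support_bound {t : Multiset ℕ} {σ : Equiv.Perm (Fin n)}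
    (h : partProd n t σ ≠ 0) : σ.support.card ≤ t.sum := by
  have := listProd_support_bound t.toList σ h
  rwa [Multiset.sum_toList] at this

lemma partProd_cycleType {t : Multiset ℕ} (ht : ∀ a ∈ t, 2 ≤ a) {σ : Equiv.Perm (Fin n)}
    (h : partProd n t σ ≠ 0) (hcard : σ.support.card = t.sum) : σ.cycleType = t := by
  obtain ⟨l, hl1, hl2, hl3⟩ :=
    listProd_factorization t.toList (fun i hi => ht i (by rwa [← Multiset.mem_toList])) σ h
  have hsum : σ.support.card = (l.map (fun g => g.support.card)).sum := by
    rw [hl3, Multiset.sum_toList, hcard]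
  have := cycleType_of_tight l σ hl2 hl1 hsum
  rw [this, hl3, Multiset.coe_toList]

lemma pairwise_commute_of_central (l : List (MonoidAlgebra ℚ (Equiv.Perm (Fin n))))
    (h : ∀ x ∈ l, ∀ y, x * y = y * x) : l.Pairwise Commute := by
  induction l with
  | nil => exact List.Pairwise.nil
  | cons a l ih =>
    refine List.Pairwise.cons (fun b _ => h a (by simp) b) (ih fun x hx => h x (by simp [hx]))

lemma cycleSum_self_one {g : Equiv.Perm (Fin n)} (hg : g.IsCycle) :
    cycleSum n g.support.card g = 1 := by
  unfold cycleSum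
  rw [if_neg (by have := hg.two_le_card_support; omega), classSum_apply, if_pos]
  rw [hg.cycleType]

lemma listProd_self_ge (l : List (Equiv.Perm (Fin n))) :
    (l.map (fun g => cycleSum n g.support.card g)).prod ≤
      (((l.map (fun g => g.support.card)).map (cycleSum n)).prod) l.prod := by
  induction l with
  | nil => simp [ma_one_apply]
  | cons g l ih =>
    simp only [List.map_cons, List.prod_cons]
    have h1 : 0 ≤ cycleSum n g.support.card g := cycleSum_nonneg _ _
    have h2 : 0 ≤ (l.map (fun g => cycleSum n g.support.card g)).prod := by
      refine List.prod_nonneg fun x hx => ?_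
      obtain ⟨g', _, rfl⟩ := List.mem_map.mp hx
      exact cycleSum_nonneg _ _
    calc cycleSum n g.support.card g * (l.map (fun g => cycleSum n g.support.card g)).prod
        ≤ cycleSum n g.support.card g *
          (((l.map (fun g => g.support.card)).map (cycleSum n)).prod) l.prod :=
          mul_le_mul_of_nonneg_left ih h1
      _ ≤ _ := ma_mul_apply_term_le (cycleSum_nonneg _) (listProd_nonneg _) g l.prod

lemma partProd_self_pos (σ : Equiv.Perm (Fin n)) :
    (1 : ℚ) ≤ partProd n σ.cycleType σ := by
  obtain ⟨⟨l, hp, hc, hd⟩, -⟩ := Trunc.exists_rep σ.truncCycleFactors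
  have hct : σ.cycleType = ↑(l.map (fun g => g.support.card)) := by
    rw [Equiv.Perm.cycleType_eq l hp hc hd]
    rfl
  have hperm : List.Perm σ.cycleType.toList (l.map (fun g => g.support.card)) := by
    rw [← Multiset.coe_eq_coe, Multiset.coe_toList, hct]
  have hprodeq : partProd n σ.cycleType =
      ((l.map (fun g => g.support.card)).map (cycleSum n)).prod := by
    unfold partProd
    refine List.Perm.prod_eq' (hperm.map (cycleSum n)) ?_
    refine pairwise_commute_of_central _ fun x hx y => ?_
    obtain ⟨i, _, rfl⟩ := List.mem_map.mp hx
    exact cycleSum_central i y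
  rw [hprodeq]
  have hge := listProd_self_ge l
  rw [hp] at hge
  refine le_trans ?_ hge
  have : ∀ g ∈ l, cycleSum n g.support.card g = 1 := fun g hg => cycleSum_self_one (hc g hg)
  rw [List.prod_eq_one]
  · intro x hx
    obtain ⟨g', hg', rfl⟩ := List.mem_map.mp hx
    exact this g' hg'

/-- a choice of permutation with given cycle type, when one exists -/
noncomputable def repPerm (n : ℕ) (t : Multiset ℕ) : Equiv.Perm (Fin n) :=
  if h : ∃ σ : Equiv.Perm (Fin n), σ.cycleType = t then h.choose else 1

lemma repPerm_spec {t : Multiset ℕ} (h : ∃ σ : Equiv.Perm (Fin n), σ.cycleType = t) :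
    (repPerm n t).cycleType = t := by
  rw [repPerm, dif_pos h]
  exact h.choose_spec

lemma central_supported_mem (n : ℕ) (k : ℕ) :
    ∀ x : MonoidAlgebra ℚ (Equiv.Perm (Fin n)), (∀ y, x * y = y * x) →
    (∀ σ, x σ ≠ 0 → σ.support.card ≤ k) →
    x ∈ Algebra.adjoin ℚ {z : MonoidAlgebra ℚ (Equiv.Perm (Fin n)) |
      ∃ i, 1 ≤ i ∧ i ≤ k ∧ z = cycleSum n i} := by
  induction k using Nat.strong_induction_on with
  | _ k IH =>
  intro x hx hsupp
  rcases Nat.eq_zero_or_pos k with hk | hk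
  · -- base case : x is a multiple of the identity
    subst hk
    have hxeq : x = x 1 • (1 : MonoidAlgebra ℚ (Equiv.Perm (Fin n))) := by
      ext σ
      rw [MonoidAlgebra.coeff_smul_apply, ma_one_apply, smul_eq_mul]
      by_cases hσ : σ = 1
      · subst hσ; simp
      · rw [if_neg hσ, mul_zero]
        by_contra hne
        have := hsupp σ hne
        exact hσ (Equiv.Perm.card_support_eq_zero.mp (Nat.le_zero.mp this))
    rw [hxeq]
    exact Subalgebra.smul_mem _ (one_mem _) _
  · classical
    set S : Finset (Multiset ℕ) :=
      (Finset.univ.filter fun σ : Equiv.Perm (Fin n) => σ.support.card = k).image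
        Equiv.Perm.cycleType with hS
    have hSfact : ∀ t ∈ S, (∃ σ : Equiv.Perm (Fin n), σ.cycleType = t ∧ σ.support.card = k) := by
      intro t ht
      obtain ⟨σ, hσ, rfl⟩ := Finset.mem_image.mp ht
      exact ⟨σ, rfl, (Finset.mem_filter.mp hσ).2⟩
    have hSsum : ∀ t ∈ S, t.sum = k := by
      intro t ht
      obtain ⟨σ, rfl, hcard⟩ := hSfact t ht
      rw [Equiv.Perm.sum_cycleType, hcard]
    have hStwo : ∀ t ∈ S, ∀ a ∈ t, 2 ≤ a := by
      intro t ht a ha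
      obtain ⟨σ, rfl, _⟩ := hSfact t ht
      exact Equiv.Perm.two_le_of_mem_cycleType ha
    have hSrep : ∀ t ∈ S, (repPerm n t).cycleType = t := by
      intro t ht
      obtain ⟨σ, hσ, _⟩ := hSfact t ht
      exact repPerm_spec ⟨σ, hσ⟩
    set y : MonoidAlgebra ℚ (Equiv.Perm (Fin n)) :=
      x - ∑ t ∈ S, (x (repPerm n t) / partProd n t (repPerm n t)) • partProd n t with hy
    have hycentral : ∀ z, y * z = z * y := by
      intro z
      rw [hy, sub_mul, mul_sub, hx z, Finset.sum_mul, Finset.mul_sum]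
      congr 1
      refine Finset.sum_congr rfl fun t _ => ?_
      rw [smul_mul_assoc, mul_smul_comm, partProd_central]
    have happ : ∀ σ, y σ = x σ - ∑ t ∈ S,
        (x (repPerm n t) / partProd n t (repPerm n t)) * (partProd n t σ) := by
      intro σ
      rw [hy, MonoidAlgebra.coeff_sub, Finsupp.sub_apply, MonoidAlgebra.coeff_sum, Finset.sum_apply']
      congr 1
    have hybound : ∀ σ, y σ ≠ 0 → σ.support.card ≤ k - 1 := by
      intro σ hσ
      by_contra hcard
      push_neg at hcard
      have hge : k ≤ σ.support.card := by omega
      apply hσ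
      rw [happ]
      rcases Nat.lt_or_ge k σ.support.card with hlt | hle
      · -- support strictly bigger than k : everything vanishes
        have hx0 : x σ = 0 := by
          by_contra hne
          exact absurd (hsupp σ hne) (by omega)
        rw [hx0]
        rw [Finset.sum_eq_zero, sub_zero]
        intro t ht
        have hP0 : partProd n t σ = 0 := by
          by_contra hne
          have := partProd_support_bound hne
          rw [hSsum t ht] at this
          omega
        rw [hP0, mul_zero]
      · -- support exactly k
        have hcardk : σ.support.card = k := by omega
        have ht₀ : σ.cycleType ∈ S := by
          refine Finset.mem_image.mpr ⟨σ, ?_, rfl⟩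
          simp [hcardk]
        rw [Finset.sum_eq_single_of_mem σ.cycleType ht₀]
        · have hrep := hSrep _ ht₀
          have hxeq : x σ = x (repPerm n σ.cycleType) :=
            central_apply_of_cycleType_eq hx (by rw [hrep])
          have hPeq : partProd n σ.cycleType σ =
              partProd n σ.cycleType (repPerm n σ.cycleType) :=
            central_apply_of_cycleType_eq (partProd_central _) (by rw [hrep])
          have hcne : partProd n σ.cycleType (repPerm n σ.cycleType) ≠ 0 := by
            have := partProd_self_pos (repPerm n σ.cycleType)
            rw [hrep] at this
            linarith
          rw [hPeq, hxeq, div_mul_cancel₀ _ hcne, sub_self]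
        · intro t ht hne
          have hP0 : partProd n t σ = 0 := by
            by_contra hPne
            have := partProd_cycleType (hStwo t ht) hPne (by rw [hcardk, hSsum t ht])
            exact hne this.symm
          rw [hP0, mul_zero]
    have hymem := IH (k - 1) (by omega) y hycentral hybound
    have hmono : Algebra.adjoin ℚ {z : MonoidAlgebra ℚ (Equiv.Perm (Fin n)) |
          ∃ i, 1 ≤ i ∧ i ≤ k - 1 ∧ z = cycleSum n i} ≤
        Algebra.adjoin ℚ {z : MonoidAlgebra ℚ (Equiv.Perm (Fin n)) |
          ∃ i, 1 ≤ i ∧ i ≤ k ∧ z = cycleSum n i} := by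
      refine Algebra.adjoin_mono ?_
      rintro z ⟨i, h1, h2, rfl⟩
      exact ⟨i, h1, by omega, rfl⟩
    have hymem' := hmono hymem
    have hPmem : ∀ t ∈ S, partProd n t ∈ Algebra.adjoin ℚ
        {z : MonoidAlgebra ℚ (Equiv.Perm (Fin n)) | ∃ i, 1 ≤ i ∧ i ≤ k ∧ z = cycleSum n i} := by
      intro t ht
      refine Subalgebra.list_prod_mem _ fun z hz => ?_
      obtain ⟨a, ha, rfl⟩ := List.mem_map.mp hz
      have hat : a ∈ t := by rwa [← Multiset.mem_toList]
      have h2a : 2 ≤ a := hStwo t ht a hat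
      have hak : a ≤ k := by
        rw [← hSsum t ht, ← Multiset.cons_erase hat, Multiset.sum_cons]
        omega
      exact Algebra.subset_adjoin ⟨a, by omega, hak, rfl⟩
    have hxeq : x = y + ∑ t ∈ S, (x (repPerm n t) / partProd n t (repPerm n t)) • partProd n t := by
      rw [hy, sub_add_cancel]
    rw [hxeq]
    refine add_mem hymem' (Subalgebra.sum_mem _ fun t ht => ?_)
    exact Subalgebra.smul_mem _ (hPmem t ht) _

theorem classSum_mem_adjoin_cycleSums (n : ℕ) (μ : n.Partition) :
    classSum n (μ.parts.filter (2 ≤ ·)) ∈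
      Algebra.adjoin ℚ {x : MonoidAlgebra ℚ (Equiv.Perm (Fin n)) |
        ∃ i, 1 ≤ i ∧ i ≤ μ.supp ∧ x = cycleSum n i} := by
  refine central_supported_mem n μ.supp _ (classSum_central _) ?_
  intro σ hσ
  rw [classSum_apply] at hσ
  have hct : σ.cycleType = μ.parts.filter (2 ≤ ·) := by
    by_contra hne; simp [hne] at hσ
  rw [← Equiv.Perm.sum_cycleType, hct]
  exact le_of_eq rfl
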